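/- Let ω, ν > 0, λ₀ = (1−i)√(ω/(2ν)), and let a, a', a'', b, b', d, κ, κ' ∈ ℂ. Define u⁰(S) = −a e^{−λ₀S}, u¹(S) = −(b + (1/2)κS a)e^{−λ₀S}, u_s¹(S) = −(a'/λ₀)e^{−λ₀S}, and the second-order profiles u²(S) = −(d + (1/2)κS b − (3κ²S/8)(1/λ₀ − S) a + (S/(2λ₀)) a'') e^{−λ₀S} and u_s²(S) = −(1/λ₀)(b' + (κ/2)(3S + 1/λ₀) a' + (κ'/2)(S + 1/λ₀) a) e^{−λ₀S}. Then for all S ≥ 0: (i) iω u²(S) + ν (u²)''(S) = κ(3iωS u¹(S) + 3νS (u¹)''(S) + ν (u¹)'(S)) + ν a'' e^{−λ₀S} − κ²(3iωS² u⁰(S) + 3νS² (u⁰)''(S) + ν(2S (u⁰)'(S) − u⁰(S))); (ii) (u_s²)'(S) = (b' + (1/2)κ'S a + (1/2)κS a') e^{−λ₀S} + κ(S (u_s¹)'(S) + u_s¹(S)); (iii) u²(0) = −d and u²(S), u_s²(S) → 0 as S → ∞. -/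

import Mathlib

open Filter Topology

noncomputable section

namespace Stmt8Aux

def mkQ (lam0 c0 c1 c2 : ℂ) : ℝ → ℂ :=
  fun S => (c0 + c1 * S + c2 * S ^ 2) * Complex.exp (-(lam0 * S))

lemma mkQ_congr {lam0 c0 c1 c2 c0' c1' c2' : ℂ} (h0 : c0 = c0') (h1 : c1 = c1')
    (h2 : c2 = c2') : mkQ lam0 c0 c1 c2 = mkQ lam0 c0' c1' c2' := by
  subst h0; subst h1; subst h2; rfl

lemma hasDerivAt_mkQ (lam0 c0 c1 c2 : ℂ) (S : ℝ) :
    HasDerivAt (mkQ lam0 c0 c1 c2)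
      (((c1 - lam0 * c0) + (2 * c2 - lam0 * c1) * S + (-(lam0 * c2)) * (S:ℂ) ^ 2)
        * Complex.exp (-(lam0 * S))) S := by
  have hexp : HasDerivAt (fun z : ℂ => Complex.exp (-(lam0 * z)))
      (Complex.exp (-(lam0 * (S:ℂ))) * (-lam0)) (S : ℂ) := by
    have h : HasDerivAt (fun z : ℂ => -(lam0 * z)) (-lam0) (S : ℂ) := by
      simpa using ((hasDerivAt_id (S : ℂ)).const_mul lam0).fun_neg
    exact h.cexp
  have hpoly : HasDerivAt (fun z : ℂ => c0 + c1 * z + c2 * z ^ 2)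
      (c1 + c2 * (2 * (S:ℂ))) (S : ℂ) := by
    have h1 := (((hasDerivAt_id (S : ℂ)).const_mul c1).const_add c0)
    have h2 := (hasDerivAt_pow 2 (S : ℂ)).const_mul c2
    simpa using h1.fun_add h2
  have h := (hpoly.fun_mul hexp).comp_ofReal
  convert h using 1
  · rfl
  ring

lemma deriv_mkQ (lam0 c0 c1 c2 : ℂ) :
    deriv (mkQ lam0 c0 c1 c2)
      = mkQ lam0 (c1 - lam0 * c0) (2 * c2 - lam0 * c1) (-(lam0 * c2)) := by
  funext S
  exact (hasDerivAt_mkQ lam0 c0 c1 c2 S).deriv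

lemma tendsto_mono (lam0 : ℂ) (h : 0 < lam0.re) (c : ℂ) (k : ℕ) :
    Tendsto (fun S : ℝ => c * (S:ℂ) ^ k * Complex.exp (-(lam0 * S))) atTop (𝓝 0) := by
  have hg : Tendsto (fun S : ℝ => ‖c‖ / lam0.re ^ k
      * ((lam0.re * S) ^ k * Real.exp (-(lam0.re * S)))) atTop (𝓝 0) := by
    have h1 : Tendsto (fun S : ℝ => lam0.re * S) atTop atTop :=
      tendsto_id.const_mul_atTop h
    have h2 := (Real.tendsto_pow_mul_exp_neg_atTop_nhds_zero k).comp h1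
    simpa using h2.const_mul (‖c‖ / lam0.re ^ k)
  apply squeeze_zero_norm' _ hg
  filter_upwards [eventually_ge_atTop (0:ℝ)] with S hS
  have hnorm : ‖c * (S:ℂ) ^ k * Complex.exp (-(lam0 * S))‖
      = ‖c‖ * S ^ k * Real.exp (-(lam0.re * S)) := by
    rw [norm_mul, norm_mul, norm_pow, Complex.norm_exp]
    simp [abs_of_nonneg hS, Complex.mul_re]
  rw [hnorm]
  rw [mul_pow]
  rw [div_mul_eq_mul_div]
  rw [le_div_iff₀ (pow_pos h k)]
  ring_nf
  exact le_refl _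

lemma tendsto_mkQ (lam0 : ℂ) (h : 0 < lam0.re) (c0 c1 c2 : ℂ) :
    Tendsto (mkQ lam0 c0 c1 c2) atTop (𝓝 0) := by
  have h0 := tendsto_mono lam0 h c0 0
  have h1 := tendsto_mono lam0 h c1 1
  have h2 := tendsto_mono lam0 h c2 2
  have H := (h0.add h1).add h2
  rw [show (0:ℂ) + 0 + 0 = 0 by ring] at H
  exact H.congr fun S => by simp only [mkQ]; ring

lemma const_mul_mkQ (x lam0 c0 c1 c2 : ℂ) (S : ℝ) :
    x * mkQ lam0 c0 c1 c2 S = mkQ lam0 (x * c0) (x * c1) (x * c2) S := by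
  simp only [mkQ]; ring

end Stmt8Aux

set_option maxHeartbeats 1000000 in
open Stmt8Aux in
/-- the second-order near-field profiles. With `λ₀ = (1−i)√(ω/(2ν))`,
`u⁰(S) = −a e^{−λ₀S}`, `u¹(S) = −(b + (1/2)κS a)e^{−λ₀S}`, `u_s¹(S) = −(a'/λ₀)e^{−λ₀S}`,
`u²(S) = −(d + (1/2)κS b − (3κ²S/8)(1/λ₀ − S) a + (S/(2λ₀)) a'')e^{−λ₀S}` and
`u_s²(S) = −(1/λ₀)(b' + (κ/2)(3S + 1/λ₀) a' + (κ'/2)(S + 1/λ₀) a)e^{−λ₀S}`,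
one has for all `S ≥ 0`:
(i) `iω u² + ν (u²)'' = κ(3iωS u¹ + 3νS (u¹)'' + ν(u¹)') + ν a'' e^{−λ₀S}
     − κ²(3iωS² u⁰ + 3νS² (u⁰)'' + ν(2S(u⁰)' − u⁰))`;
(ii) `(u_s²)' = (b' + (1/2)κ'S a + (1/2)κS a')e^{−λ₀S} + κ(S(u_s¹)' + u_s¹)`;
(iii) `u²(0) = −d` and `u², u_s² → 0` as `S → ∞`. -/
theorem stmt_8 (ω ν : ℝ) (hω : 0 < ω) (hν : 0 < ν)
    (lam0 : ℂ) (hlam : lam0 = (1 - Complex.I) * (Real.sqrt (ω / (2 * ν)) : ℂ))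
    (a a' a'' b b' d κ κ' : ℂ) :
    let u0 : ℝ → ℂ := fun S => -a * Complex.exp (-(lam0 * S))
    let u1 : ℝ → ℂ := fun S => -(b + (1 / 2) * κ * S * a) * Complex.exp (-(lam0 * S))
    let us1 : ℝ → ℂ := fun S => -(a' / lam0) * Complex.exp (-(lam0 * S))
    let u2 : ℝ → ℂ := fun S =>
      -(d + (1 / 2) * κ * S * b - (3 * κ ^ 2 * S / 8) * (1 / lam0 - S) * a
          + (S / (2 * lam0)) * a'') * Complex.exp (-(lam0 * S))
    let us2 : ℝ → ℂ := fun S =>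
      -(1 / lam0) * (b' + (κ / 2) * (3 * S + 1 / lam0) * a'
          + (κ' / 2) * (S + 1 / lam0) * a) * Complex.exp (-(lam0 * S))
    (∀ S : ℝ, 0 ≤ S →
      Complex.I * ω * u2 S + ν * deriv (deriv u2) S
        = κ * (3 * Complex.I * ω * S * u1 S + 3 * ν * S * deriv (deriv u1) S
              + ν * deriv u1 S)
          + ν * a'' * Complex.exp (-(lam0 * S))
          - κ ^ 2 * (3 * Complex.I * ω * S ^ 2 * u0 S
              + 3 * ν * S ^ 2 * deriv (deriv u0) S
              + ν * (2 * S * deriv u0 S - u0 S)))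
    ∧ (∀ S : ℝ, 0 ≤ S →
      deriv us2 S
        = (b' + (1 / 2) * κ' * S * a + (1 / 2) * κ * S * a') * Complex.exp (-(lam0 * S))
          + κ * (S * deriv us1 S + us1 S))
    ∧ u2 0 = -d
    ∧ Tendsto u2 atTop (nhds 0)
    ∧ Tendsto us2 atTop (nhds 0) := by
  intro u0 u1 us1 u2 us2
  have hν' : (ν : ℂ) ≠ 0 := by exact_mod_cast hν.ne'
  have hω' : (ω : ℂ) ≠ 0 := by exact_mod_cast hω.ne'
  have hsq : lam0 ^ 2 = -(Complex.I * ω / ν) := by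
    rw [hlam, mul_pow]
    have h1 : ((Real.sqrt (ω / (2 * ν)) : ℝ) : ℂ) ^ 2 = ((ω / (2 * ν) : ℝ) : ℂ) := by
      norm_cast
      exact Real.sq_sqrt (le_of_lt (div_pos hω (by positivity)))
    rw [h1, show (1 - Complex.I) ^ 2 = -2 * Complex.I by
      rw [sub_sq, Complex.I_sq]; ring]
    push_cast
    field_simp
  have hlam0 : lam0 ≠ 0 := by
    rw [hlam]
    refine mul_ne_zero (fun h => ?_) ?_
    · have := congrArg Complex.re h
      simp at this
    · exact_mod_cast (Real.sqrt_pos.mpr (by positivity)).ne'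
  have hIω : Complex.I * (ω : ℂ) = -(ν : ℂ) * lam0 ^ 2 := by
    rw [hsq]; field_simp
  have hIω3 : (3 : ℂ) * Complex.I * (ω : ℂ) = -3 * (ν : ℂ) * lam0 ^ 2 := by
    rw [mul_assoc, hIω]; ring
  have hre : 0 < lam0.re := by
    rw [hlam]
    have : (0:ℝ) < Real.sqrt (ω / (2 * ν)) := Real.sqrt_pos.mpr (by positivity)
    simpa [Complex.mul_re] using this
  -- canonical forms
  have hu0 : u0 = mkQ lam0 (-a) 0 0 := by
    funext S; simp only [u0, mkQ]; ring
  have hu1 : u1 = mkQ lam0 (-b) (-(κ * a / 2)) 0 := by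
    funext S; simp only [u1, mkQ]; ring
  have hus1 : us1 = mkQ lam0 (-(a' / lam0)) 0 0 := by
    funext S; simp only [us1, mkQ]; ring
  have hu2 : u2 = mkQ lam0 (-d)
      (-(κ * b / 2) + 3 * κ ^ 2 * a / (8 * lam0) - a'' / (2 * lam0))
      (-(3 * κ ^ 2 * a / 8)) := by
    funext S; simp only [u2, mkQ]; ring
  have hus2 : us2 = mkQ lam0
      (-(1 / lam0) * (b' + κ * a' / (2 * lam0) + κ' * a / (2 * lam0)))
      (-(1 / lam0) * (3 * κ * a' / 2 + κ' * a / 2)) 0 := by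
    funext S; simp only [us2, mkQ]; ring
  -- clean derivatives
  have hd2u2 : deriv (deriv u2) = mkQ lam0
      (lam0 * κ * b + a'' - 3 * κ ^ 2 * a / 2 - lam0 ^ 2 * d)
      (15 * κ ^ 2 * a * lam0 / 8 - κ * b * lam0 ^ 2 / 2 - a'' * lam0 / 2)
      (-(3 * κ ^ 2 * a * lam0 ^ 2 / 8)) := by
    rw [hu2, deriv_mkQ, deriv_mkQ]
    exact mkQ_congr
      (by linear_combination (a'' - 3 * κ ^ 2 * a / 4) * (mul_inv_cancel₀ hlam0))
      (by linear_combination (3 * κ ^ 2 * a * lam0 / 8 - a'' * lam0 / 2)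
            * (mul_inv_cancel₀ hlam0))
      (by ring)
  have hIu2 : ∀ S : ℝ, Complex.I * (ω : ℂ) * u2 S = mkQ lam0 (ν * lam0 ^ 2 * d)
      (ν * κ * b * lam0 ^ 2 / 2 - 3 * ν * κ ^ 2 * a * lam0 / 8 + ν * a'' * lam0 / 2)
      (3 * ν * κ ^ 2 * a * lam0 ^ 2 / 8) S := by
    intro S
    rw [hIω, hu2, const_mul_mkQ]
    exact congrFun (mkQ_congr (by ring)
      (by linear_combination ((ν:ℂ) * a'' * lam0 / 2 - 3 * ν * κ ^ 2 * a * lam0 / 8)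
            * (mul_inv_cancel₀ hlam0))
      (by ring)) S
  have hdus1 : deriv us1 = mkQ lam0 a' 0 0 := by
    rw [hus1, deriv_mkQ]
    exact mkQ_congr (by linear_combination a' * (mul_inv_cancel₀ hlam0)) (by simp) (by simp)
  have hdus2 : deriv us2 = mkQ lam0 (b' - κ * a' / lam0)
      (3 * κ * a' / 2 + κ' * a / 2) 0 := by
    rw [hus2, deriv_mkQ]
    exact mkQ_congr
      (by linear_combination (b' + κ * a' / (2 * lam0) + κ' * a / (2 * lam0))
            * (mul_inv_cancel₀ hlam0))
      (by linear_combination (3 * κ * a' / 2 + κ' * a / 2) * (mul_inv_cancel₀ hlam0))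
      (by simp)
  refine ⟨?_, ?_, ?_, ?_, ?_⟩
  · intro S hS
    rw [hIu2 S, hd2u2, hu0, hu1]
    simp only [deriv_mkQ]
    rw [hIω3]
    simp only [mkQ]
    ring
  · intro S hS
    rw [hdus2, hdus1, hus1]
    simp only [mkQ]
    ring
  · norm_num [u2, Complex.exp_zero]
  · rw [hu2]; exact tendsto_mkQ lam0 hre _ _ _
  · rw [hus2]; exact tendsto_mkQ lam0 hre _ _ _
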